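/- (X-symmetry Lemma.) Let N ≥ 1, let R and S be charge-conserving width-2 rank-N matrices such that the pair (S,R) satisfies the loop braid relations, and let g : Fin N × Fin N → ℂ be a function with g p ≠ 0 for every p, with X = Matrix.diagonal g and X' = Matrix.diagonal (fun p => (g p)⁻¹) (so X * X' = 1). Then the pair (X * S * X', X * R * X') also satisfies the loop braid relations. -/
import Mathlib

open Matrix

noncomputable section

/-- The width-3 matrix `M₁ = M ⊗ 1`. -/
def Lone {N : ℕ} (M : Matrix (Fin N × Fin N) (Fin N × Fin N) ℂ) :
    Matrix (Fin N × Fin N × Fin N) (Fin N × Fin N × Fin N) ℂ :=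
  Matrix.of fun p q =>
    M (p.1, p.2.1) (q.1, q.2.1) * (if p.2.2 = q.2.2 then (1 : ℂ) else 0)

/-- The width-3 matrix `M₂ = 1 ⊗ M`. -/
def Ltwo {N : ℕ} (M : Matrix (Fin N × Fin N) (Fin N × Fin N) ℂ) :
    Matrix (Fin N × Fin N × Fin N) (Fin N × Fin N × Fin N) ℂ :=
  Matrix.of fun p q =>
    (if p.1 = q.1 then (1 : ℂ) else 0) * M (p.2.1, p.2.2) (q.2.1, q.2.2)

/-- The pair (S,R) satisfies the loop braid relations. -/
def LoopBraid {N : ℕ} (S R : Matrix (Fin N × Fin N) (Fin N × Fin N) ℂ) : Prop :=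
  S * S = 1 ∧
  Lone S * Ltwo S * Lone S = Ltwo S * Lone S * Ltwo S ∧
  Lone R * Ltwo R * Lone R = Ltwo R * Lone R * Ltwo R ∧
  Lone R * Ltwo R * Lone S = Ltwo S * Lone R * Ltwo R ∧
  Lone R * Ltwo S * Lone S = Ltwo S * Lone S * Ltwo R

/-- A width-2 rank-N matrix is charge-conserving. -/
def ChargeConserving {N : ℕ} (M : Matrix (Fin N × Fin N) (Fin N × Fin N) ℂ) : Prop :=
  ∀ k l i j : Fin N, M (k, l) (i, j) ≠ 0 → ((k, l) = (i, j) ∨ (k, l) = (j, i))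

/-- The width-3 potential. -/
def Phi {N : ℕ} (g : Fin N × Fin N → ℂ) (w : Fin N × Fin N × Fin N) : ℂ :=
  g (w.1, w.2.1) * g (w.1, w.2.2) * g (w.2.1, w.2.2)

lemma loneConj {N : ℕ} (M : Matrix (Fin N × Fin N) (Fin N × Fin N) ℂ)
    (hcc : ChargeConserving M) (g : Fin N × Fin N → ℂ) (hg : ∀ p, g p ≠ 0) :
    Lone (Matrix.diagonal g * M * Matrix.diagonal (fun p => (g p)⁻¹)) =
      Matrix.diagonal (Phi g) * Lone M * Matrix.diagonal (fun w => (Phi g w)⁻¹) := by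
  ext ⟨a, b, c⟩ ⟨a', b', c'⟩
  simp only [Lone, Matrix.of_apply, Matrix.diagonal_mul, Matrix.mul_diagonal, Phi]
  by_cases hc : c = c'
  · subst hc
    simp only [if_pos rfl, mul_one]
    by_cases hM : M (a, b) (a', b') = 0
    · simp [hM]
    · rcases hcc a b a' b' hM with h | h <;>
        · obtain ⟨h1, h2⟩ := Prod.mk.injEq .. ▸ h
          subst h1; subst h2
          have hp : g (a, c) ≠ 0 := hg _
          have hq : g (b, c) ≠ 0 := hg _
          have hr : g (a, b) ≠ 0 := hg _
          have hs : g (b, a) ≠ 0 := hg _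
          field_simp
          try ring
  · simp [hc]

lemma ltwoConj {N : ℕ} (M : Matrix (Fin N × Fin N) (Fin N × Fin N) ℂ)
    (hcc : ChargeConserving M) (g : Fin N × Fin N → ℂ) (hg : ∀ p, g p ≠ 0) :
    Ltwo (Matrix.diagonal g * M * Matrix.diagonal (fun p => (g p)⁻¹)) =
      Matrix.diagonal (Phi g) * Ltwo M * Matrix.diagonal (fun w => (Phi g w)⁻¹) := by
  ext ⟨a, b, c⟩ ⟨a', b', c'⟩
  simp only [Ltwo, Matrix.of_apply, Matrix.diagonal_mul, Matrix.mul_diagonal, Phi]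
  by_cases ha : a = a'
  · subst ha
    simp only [if_pos rfl, one_mul]
    by_cases hM : M (b, c) (b', c') = 0
    · simp [hM]
    · rcases hcc b c b' c' hM with h | h <;>
        · obtain ⟨h1, h2⟩ := Prod.mk.injEq .. ▸ h
          subst h1; subst h2
          have hp : g (a, b) ≠ 0 := hg _
          have hq : g (a, c) ≠ 0 := hg _
          have hr : g (b, c) ≠ 0 := hg _
          have hs : g (c, b) ≠ 0 := hg _
          field_simp
          try ring
  · simp [ha]

lemma conj3 {α : Type*} [Monoid α] (E E' a b c : α) (h : E' * E = 1) :
    (E * a * E') * (E * b * E') * (E * c * E') = E * (a * b * c) * E' := by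
  have h1 : ∀ x y : α, (E * x * E') * (E * y * E') = E * (x * y) * E' := by
    intro x y
    calc (E * x * E') * (E * y * E') = E * x * ((E' * E) * (y * E')) := by
          simp only [mul_assoc]
      _ = E * (x * y) * E' := by rw [h, one_mul]; simp only [mul_assoc]
  rw [h1, h1]

theorem stmt8 (N : ℕ) (hN : 1 ≤ N)
    (R S : Matrix (Fin N × Fin N) (Fin N × Fin N) ℂ)
    (hccR : ChargeConserving R) (hccS : ChargeConserving S)
    (hlb : LoopBraid S R)
    (g : Fin N × Fin N → ℂ) (hg : ∀ p, g p ≠ 0) :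
    LoopBraid
      (Matrix.diagonal g * S * Matrix.diagonal (fun p => (g p)⁻¹))
      (Matrix.diagonal g * R * Matrix.diagonal (fun p => (g p)⁻¹)) := by
  obtain ⟨h1, h2, h3, h4, h5⟩ := hlb
  have hX'X : (Matrix.diagonal fun p => (g p)⁻¹) * Matrix.diagonal g = 1 := by
    have h : (fun p => (g p)⁻¹ * g p) = fun _ => (1 : ℂ) :=
      funext fun p => inv_mul_cancel₀ (hg p)
    rw [Matrix.diagonal_mul_diagonal, h, Matrix.diagonal_one]
  have hXX' : Matrix.diagonal g * Matrix.diagonal (fun p => (g p)⁻¹) = 1 := by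
    have h : (fun p => g p * (g p)⁻¹) = fun _ => (1 : ℂ) :=
      funext fun p => mul_inv_cancel₀ (hg p)
    rw [Matrix.diagonal_mul_diagonal, h, Matrix.diagonal_one]
  have hE'E : (Matrix.diagonal fun w => (Phi (N := N) g w)⁻¹) * Matrix.diagonal (Phi g) = 1 := by
    have h : (fun w : Fin N × Fin N × Fin N => (Phi g w)⁻¹ * Phi g w) = fun _ => (1 : ℂ) :=
      funext fun w => inv_mul_cancel₀ (mul_ne_zero (mul_ne_zero (hg _) (hg _)) (hg _))
    rw [Matrix.diagonal_mul_diagonal, h, Matrix.diagonal_one]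
  set X := Matrix.diagonal g
  set X' := Matrix.diagonal (fun p => (g p)⁻¹)
  have hS1 := loneConj S hccS g hg
  have hS2 := ltwoConj S hccS g hg
  have hR1 := loneConj R hccR g hg
  have hR2 := ltwoConj R hccR g hg
  refine ⟨?_, ?_, ?_, ?_, ?_⟩
  · have : X' * (X * (S * X')) = S * X' := by rw [← mul_assoc, hX'X, one_mul]
    calc (X * S * X') * (X * S * X') = X * (S * (X' * (X * (S * X')))) := by
          simp only [mul_assoc]
      _ = X * (S * S) * X' := by rw [this]; simp only [mul_assoc]
      _ = 1 := by rw [h1, mul_one, hXX']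
  · rw [hS1, hS2, conj3 _ _ _ _ _ hE'E, conj3 _ _ _ _ _ hE'E, h2]
  · rw [hR1, hR2, conj3 _ _ _ _ _ hE'E, conj3 _ _ _ _ _ hE'E, h3]
  · rw [hS1, hS2, hR1, hR2, conj3 _ _ _ _ _ hE'E, conj3 _ _ _ _ _ hE'E, h4]
  · rw [hS1, hS2, hR1, hR2, conj3 _ _ _ _ _ hE'E, conj3 _ _ _ _ _ hE'E, h5]
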